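/- The Collaborative Learning game has at least one pure-strategy Nash Equilibrium if the condition b''(Φ)·(∂Φ_1/∂p1 · ∂Φ_1/∂p2 − ∂Φ_2/∂p1 · ∂Φ_2/∂p2) = b'(Φ)·(∂²Φ_2/∂p1∂p2 − ∂²Φ_1/∂p1∂p2) holds, where the benefit function is evaluated at the respective Φ_n. In particular, this follows because under this condition the normalized game with utilities ũ_n = u_n/B_n is an exact potential game. -/

import Mathlib

private lemma aux_hasDerivAt_snd {Φ : ℝ → ℝ → ℝ}
    (hΦ : ContDiff ℝ 2 (fun p : ℝ × ℝ => Φ p.1 p.2)) (s y : ℝ) :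
    HasDerivAt (fun t => Φ s t)
      (fderiv ℝ (fun p : ℝ × ℝ => Φ p.1 p.2) (s, y) (0, 1)) y := by
  have h1 : HasDerivAt (fun t : ℝ => ((s, t) : ℝ × ℝ)) ((0 : ℝ), (1 : ℝ)) y :=
    HasDerivAt.prodMk (hasDerivAt_const y s) (hasDerivAt_id y)
  have h2 := (hΦ.differentiable (by norm_num) (s, y)).hasFDerivAt
  exact h2.comp_hasDerivAt y h1

private lemma aux_hasDerivAt_fst {Φ : ℝ → ℝ → ℝ}
    (hΦ : ContDiff ℝ 2 (fun p : ℝ × ℝ => Φ p.1 p.2)) (x y : ℝ) :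
    HasDerivAt (fun t => Φ t y)
      (fderiv ℝ (fun p : ℝ × ℝ => Φ p.1 p.2) (x, y) (1, 0)) x := by
  have h1 : HasDerivAt (fun t : ℝ => ((t, y) : ℝ × ℝ)) ((1 : ℝ), (0 : ℝ)) x :=
    HasDerivAt.prodMk (hasDerivAt_id x) (hasDerivAt_const x y)
  have h2 := (hΦ.differentiable (by norm_num) (x, y)).hasFDerivAt
  exact h2.comp_hasDerivAt x h1

private lemma aux_contDiff_partial_snd {Φ : ℝ → ℝ → ℝ}
    (hΦ : ContDiff ℝ 2 (fun p : ℝ × ℝ => Φ p.1 p.2)) (y : ℝ) :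
    ContDiff ℝ 1 (fun s => deriv (fun t => Φ s t) y) := by
  have he : (fun s => deriv (fun t => Φ s t) y)
      = fun s => fderiv ℝ (fun p : ℝ × ℝ => Φ p.1 p.2) (s, y) ((0 : ℝ), (1 : ℝ)) := by
    funext s; exact (aux_hasDerivAt_snd hΦ s y).deriv
  rw [he]
  have h1 : ContDiff ℝ 1 (fderiv ℝ (fun p : ℝ × ℝ => Φ p.1 p.2)) :=
    hΦ.fderiv_right (by norm_num)
  have h2 : ContDiff ℝ 1 fun s : ℝ => ((s, y) : ℝ × ℝ) := contDiff_id.prodMk contDiff_const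
  exact (h1.comp h2).clm_apply contDiff_const

private lemma aux_cross_chain {Φ : ℝ → ℝ → ℝ} (b : ℝ → ℝ) (hb : ContDiff ℝ 2 b)
    (hΦ : ContDiff ℝ 2 (fun p : ℝ × ℝ => Φ p.1 p.2)) (x y : ℝ) :
    deriv (fun s => deriv (fun t => b (Φ s t)) y) x
      = deriv (deriv b) (Φ x y) * (deriv (fun t => Φ t y) x * deriv (fun t => Φ x t) y)
        + deriv b (Φ x y) * deriv (fun s => deriv (fun t => Φ s t) y) x := by
  have hb' : ContDiff ℝ 1 (deriv b) := by
    have : ContDiff ℝ ((1 : ℕ∞) + 1) b := by exact_mod_cast hb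
    exact (contDiff_succ_iff_deriv.mp this).2.2
  have hstep : (fun s => deriv (fun t => b (Φ s t)) y)
      = fun s => deriv b (Φ s y) * deriv (fun t => Φ s t) y := by
    funext s
    have hΦd : HasDerivAt (fun t => Φ s t) (deriv (fun t => Φ s t) y) y :=
      (aux_hasDerivAt_snd hΦ s y).differentiableAt.hasDerivAt
    have hbd : HasDerivAt b (deriv b (Φ s y)) (Φ s y) :=
      (hb.differentiable (by norm_num) (Φ s y)).hasDerivAt
    exact (hbd.comp y hΦd).deriv
  rw [hstep]
  have h1 : HasDerivAt (fun t => Φ t y) (deriv (fun t => Φ t y) x) x :=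
    (aux_hasDerivAt_fst hΦ x y).differentiableAt.hasDerivAt
  have hbd2 : HasDerivAt (deriv b) (deriv (deriv b) (Φ x y)) (Φ x y) :=
    (hb'.differentiable one_ne_zero (Φ x y)).hasDerivAt
  have hA : HasDerivAt (fun s => deriv b (Φ s y))
      (deriv (deriv b) (Φ x y) * deriv (fun t => Φ t y) x) x := by have := hbd2.comp x h1; exact this
  have hB : HasDerivAt (fun s => deriv (fun t => Φ s t) y)
      (deriv (fun s => deriv (fun t => Φ s t) y) x) x :=
    ((aux_contDiff_partial_snd hΦ y).differentiable one_ne_zero x).hasDerivAt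
  have := (hA.mul hB).deriv
  rw [show deriv (fun s => deriv b (Φ s y) * deriv (fun t => Φ s t) y) x = _ from this]; ring


/-- The Collaborative Learning game admits at least one pure-strategy Nash
Equilibrium provided the potential-game condition
  b''·(∂₁Φ₁·∂₂Φ₁ − ∂₁Φ₂·∂₂Φ₂) = b'·(∂²₁₂Φ₂ − ∂²₁₂Φ₁)
holds everywhere (with b', b'' the derivatives of the benefit with respect to Φ,
evaluated at the respective Φₙ). -/
theorem col_potential_condition_NE
    (b : ℝ → ℝ → ℝ) (c : ℝ → ℝ) (Φ1 Φ2 : ℝ → ℝ → ℝ)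
    (θ1 θ2 B1 B2 C1 C2 : ℝ) (hB1 : 0 < B1) (hB2 : 0 < B2) (hC1 : 0 ≤ C1) (hC2 : 0 ≤ C2)
    (hb1 : ContDiff ℝ 2 (b θ1)) (hb2 : ContDiff ℝ 2 (b θ2))
    (hc : ContDiff ℝ 2 c)
    (hΦ1 : ContDiff ℝ 2 (fun p : ℝ × ℝ => Φ1 p.1 p.2))
    (hΦ2 : ContDiff ℝ 2 (fun p : ℝ × ℝ => Φ2 p.1 p.2))
    (u1 u2 : ℝ → ℝ → ℝ)
    (hu1 : ∀ p1 p2, u1 p1 p2 = B1 * b θ1 (Φ1 p1 p2) - C1 * c p1)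
    (hu2 : ∀ p1 p2, u2 p1 p2 = B2 * b θ2 (Φ2 p1 p2) - C2 * c p2)
    (hcond : ∀ p1 p2 : ℝ,
      deriv (deriv (b θ1)) (Φ1 p1 p2) *
          (deriv (fun t => Φ1 t p2) p1 * deriv (fun t => Φ1 p1 t) p2) -
        deriv (deriv (b θ2)) (Φ2 p1 p2) *
          (deriv (fun t => Φ2 t p2) p1 * deriv (fun t => Φ2 p1 t) p2) =
      deriv (b θ2) (Φ2 p1 p2) *
          deriv (fun s => deriv (fun t => Φ2 s t) p2) p1 -
        deriv (b θ1) (Φ1 p1 p2) *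
          deriv (fun s => deriv (fun t => Φ1 s t) p2) p1) :
    ∃ p1 ∈ Set.Icc (0:ℝ) 1, ∃ p2 ∈ Set.Icc (0:ℝ) 1,
      (∀ q1 ∈ Set.Icc (0:ℝ) 1, u1 q1 p2 ≤ u1 p1 p2) ∧
      (∀ q2 ∈ Set.Icc (0:ℝ) 1, u2 p1 q2 ≤ u2 p1 p2) := by
  -- the composed benefit functions
  set F1 : ℝ → ℝ → ℝ := fun x y => b θ1 (Φ1 x y) with hF1def
  set F2 : ℝ → ℝ → ℝ := fun x y => b θ2 (Φ2 x y) with hF2def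
  have hF1 : ContDiff ℝ 2 (fun p : ℝ × ℝ => F1 p.1 p.2) := hb1.comp hΦ1
  have hF2 : ContDiff ℝ 2 (fun p : ℝ × ℝ => F2 p.1 p.2) := hb2.comp hΦ2
  -- equality of mixed second partials
  have hcross : ∀ x y : ℝ,
      deriv (fun s => deriv (fun t => F1 s t) y) x
        = deriv (fun s => deriv (fun t => F2 s t) y) x := by
    intro x y
    have e1 := aux_cross_chain (b θ1) hb1 hΦ1 x y
    have e2 := aux_cross_chain (b θ2) hb2 hΦ2 x y
    have hc' := hcond x y
    simp only [hF1def, hF2def]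
    rw [e1, e2]; linarith
  -- the second partials of F2 - F1 do not depend on the first variable
  have hD2const : ∀ (y x x' : ℝ),
      deriv (fun t => F2 x t) y - deriv (fun t => F1 x t) y
        = deriv (fun t => F2 x' t) y - deriv (fun t => F1 x' t) y := by
    intro y x x'
    apply is_const_of_deriv_eq_zero
      (f := fun s => deriv (fun t => F2 s t) y - deriv (fun t => F1 s t) y)
    · exact ((aux_contDiff_partial_snd hF2 y).differentiable one_ne_zero).sub
        ((aux_contDiff_partial_snd hF1 y).differentiable one_ne_zero)
    · intro s
      have d2 : DifferentiableAt ℝ (fun s => deriv (fun t => F2 s t) y) s :=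
        (aux_contDiff_partial_snd hF2 y).differentiable one_ne_zero s
      have d1 : DifferentiableAt ℝ (fun s => deriv (fun t => F1 s t) y) s :=
        (aux_contDiff_partial_snd hF1 y).differentiable one_ne_zero s
      rw [show deriv (fun s => deriv (fun t => F2 s t) y - deriv (fun t => F1 s t) y) s = _ from
        deriv_sub d2 d1, hcross s y, sub_self]
  -- separability of D := F2 - F1
  have hsep : ∀ x y y' : ℝ,
      (F2 x y - F1 x y) - (F2 x y' - F1 x y')
        = (F2 0 y - F1 0 y) - (F2 0 y' - F1 0 y') := by
    intro x y y'
    have key := is_const_of_deriv_eq_zero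
      (f := fun t => (F2 x t - F1 x t) - (F2 0 t - F1 0 t)) ?_ ?_ y y'
    · linarith
    · intro t
      exact ((((aux_hasDerivAt_snd hF2 x t).differentiableAt).sub
        ((aux_hasDerivAt_snd hF1 x t).differentiableAt)).sub
        (((aux_hasDerivAt_snd hF2 0 t).differentiableAt).sub
        ((aux_hasDerivAt_snd hF1 0 t).differentiableAt)))
    · intro t
      have h2x : HasDerivAt (fun u => F2 x u) (deriv (fun u => F2 x u) t) t :=
        (aux_hasDerivAt_snd hF2 x t).differentiableAt.hasDerivAt
      have h1x : HasDerivAt (fun u => F1 x u) (deriv (fun u => F1 x u) t) t :=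
        (aux_hasDerivAt_snd hF1 x t).differentiableAt.hasDerivAt
      have h20 : HasDerivAt (fun u => F2 0 u) (deriv (fun u => F2 0 u) t) t :=
        (aux_hasDerivAt_snd hF2 0 t).differentiableAt.hasDerivAt
      have h10 : HasDerivAt (fun u => F1 0 u) (deriv (fun u => F1 0 u) t) t :=
        (aux_hasDerivAt_snd hF1 0 t).differentiableAt.hasDerivAt
      have := ((h2x.sub h1x).sub (h20.sub h10)).deriv
      rw [show deriv (fun t => F2 x t - F1 x t - (F2 0 t - F1 0 t)) t = _ from this]
      have := hD2const t x 0
      linarith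
  -- the potential function
  set V : ℝ × ℝ → ℝ := fun p =>
    F1 p.1 p.2 - (C1 / B1) * c p.1 + (F2 0 p.2 - F1 0 p.2) - (C2 / B2) * c p.2 with hVdef
  have hVcont : Continuous V := by
    have hF1c : Continuous (fun p : ℝ × ℝ => F1 p.1 p.2) := hF1.continuous
    have hF2c : Continuous (fun p : ℝ × ℝ => F2 p.1 p.2) := hF2.continuous
    have hcc : Continuous c := hc.continuous
    have h0 : Continuous (fun y : ℝ => ((0 : ℝ), y)) := by continuity
    refine (((hF1c.sub (continuous_const.mul (hcc.comp continuous_fst))).add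
      (((hF2c.comp (h0.comp continuous_snd)).sub
        (hF1c.comp (h0.comp continuous_snd))))).sub
      (continuous_const.mul (hcc.comp continuous_snd)))
  -- maximize the potential on the compact square
  obtain ⟨p, hp, hpmax⟩ := (isCompact_Icc.prod isCompact_Icc).exists_isMaxOn
    (s := Set.Icc (0:ℝ) 1 ×ˢ Set.Icc (0:ℝ) 1)
    ⟨((0:ℝ), (0:ℝ)), by norm_num⟩ hVcont.continuousOn
  obtain ⟨hp1, hp2⟩ := hp
  refine ⟨p.1, hp1, p.2, hp2, ?_, ?_⟩
  · intro q1 hq1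
    have hle : V (q1, p.2) ≤ V (p.1, p.2) := hpmax (Set.mem_prod.mpr ⟨hq1, hp2⟩)
    simp only [hVdef] at hle
    have h1 : F1 q1 p.2 - (C1 / B1) * c q1 ≤ F1 p.1 p.2 - (C1 / B1) * c p.1 := by
      linarith
    have hmul := mul_le_mul_of_nonneg_left h1 hB1.le
    have hCB : B1 * (C1 / B1) = C1 := by field_simp
    rw [hu1, hu1]
    simp only [hF1def] at hmul
    rw [mul_sub, mul_sub, ← mul_assoc, ← mul_assoc, hCB] at hmul
    linarith
  · intro q2 hq2
    have hle : V (p.1, q2) ≤ V (p.1, p.2) := hpmax (Set.mem_prod.mpr ⟨hp1, hq2⟩)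
    simp only [hVdef] at hle
    have hs := hsep p.1 p.2 q2
    have h2 : F2 p.1 q2 - (C2 / B2) * c q2 ≤ F2 p.1 p.2 - (C2 / B2) * c p.2 := by
      linarith
    have hmul := mul_le_mul_of_nonneg_left h2 hB2.le
    have hCB : B2 * (C2 / B2) = C2 := by field_simp
    rw [hu2, hu2]
    simp only [hF2def] at hmul
    rw [mul_sub, mul_sub, ← mul_assoc, ← mul_assoc, hCB] at hmul
    linarith
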